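/- arXiv:2002.05399 — 2 statements merged into one kernel-verified Lean document; each statement's English description precedes it below -/
import Mathlib

section
/- Let q ≥ 1, let D > 0 and 0 < R < 1/D. Let V ⊆ ℂ × ℂ^{q−1} be an open neighborhood of the origin and let r : V → ℝ be a function satisfying 0 ≤ r(η₁, η') ≤ D(|Re η₁|⁴ + ‖η'‖⁴) for all (η₁, η') ∈ V. Define Ω' := {(η₁, η') ∈ V : Im η₁ > ‖η'‖² + |η₁|²/R − r(η₁, η')}. Then there exists ρ > 0 with B(0,ρ) ⊆ V such that {(η₁,η') : Im η₁ > ‖η'‖² + |η₁|²/R} ∩ B(0,ρ) ⊆ Ω' ∩ B(0,ρ) ⊆ {(η₁,η') : Im η₁ > ‖η'‖²} ∩ B(0,ρ). -/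
open Set

set_option maxHeartbeats 1000000 in
/-- Local comparison of a perturbed Siegel domain with a horosphere and the Siegel
half-space: if `Ω' = {η ∈ V : Im η₁ > ‖η'‖² + |η₁|²/R − r(η)}` where
`0 ≤ r(η) ≤ D(|Re η₁|⁴ + ‖η'‖⁴)` and `0 < R < 1/D`, then near the origin
`E_{ℍ^q}(I,0,R) ⊆ Ω' ⊆ ℍ^q`. -/
theorem horosphere_subset_perturbed_subset_siegel
    (q : ℕ) (hq : 1 ≤ q) (D R : ℝ) (hD : 0 < D) (hR : 0 < R) (hRD : R < 1 / D)
    (V : Set (ℂ × EuclideanSpace ℂ (Fin (q - 1)))) (hV : IsOpen V)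
    (h0V : ((0, 0) : ℂ × EuclideanSpace ℂ (Fin (q - 1))) ∈ V)
    (r : ℂ × EuclideanSpace ℂ (Fin (q - 1)) → ℝ)
    (hr0 : ∀ η ∈ V, 0 ≤ r η)
    (hrD : ∀ η ∈ V, r η ≤ D * (|η.1.re| ^ 4 + ‖η.2‖ ^ 4)) :
    ∃ ρ > (0 : ℝ),
      {η : ℂ × EuclideanSpace ℂ (Fin (q - 1)) | ‖η.1‖ ^ 2 + ‖η.2‖ ^ 2 < ρ ^ 2} ⊆ V ∧
      {η : ℂ × EuclideanSpace ℂ (Fin (q - 1)) | η.1.im > ‖η.2‖ ^ 2 + ‖η.1‖ ^ 2 / R} ∩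
          {η | ‖η.1‖ ^ 2 + ‖η.2‖ ^ 2 < ρ ^ 2} ⊆
        {η ∈ V | η.1.im > ‖η.2‖ ^ 2 + ‖η.1‖ ^ 2 / R - r η} ∩
          {η | ‖η.1‖ ^ 2 + ‖η.2‖ ^ 2 < ρ ^ 2} ∧
      {η ∈ V | η.1.im > ‖η.2‖ ^ 2 + ‖η.1‖ ^ 2 / R - r η} ∩
          {η | ‖η.1‖ ^ 2 + ‖η.2‖ ^ 2 < ρ ^ 2} ⊆
        {η : ℂ × EuclideanSpace ℂ (Fin (q - 1)) | η.1.im > ‖η.2‖ ^ 2} ∩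
          {η | ‖η.1‖ ^ 2 + ‖η.2‖ ^ 2 < ρ ^ 2} := by
  obtain ⟨ε, hε, hballV⟩ := Metric.isOpen_iff.mp hV _ h0V
  have hRD' : R * D < 1 := (lt_div_iff₀ hD).mp hRD
  set ρ : ℝ := min 1 (min ε (min (R / 4) (Real.sqrt (R⁻¹ * D⁻¹)))) with hρdef
  have hρpos : 0 < ρ := by
    refine lt_min one_pos (lt_min hε (lt_min (by positivity) (Real.sqrt_pos.mpr (by positivity))))
  have hρ1 : ρ ≤ 1 := min_le_left _ _
  have hρε : ρ ≤ ε := le_trans (min_le_right _ _) (min_le_left _ _)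
  have hρR : ρ ≤ R / 4 :=
    le_trans (min_le_right _ _) (le_trans (min_le_right _ _) (min_le_left _ _))
  have hρs : ρ ≤ Real.sqrt (R⁻¹ * D⁻¹) :=
    le_trans (min_le_right _ _) (le_trans (min_le_right _ _) (min_le_right _ _))
  have hρ2 : ρ ^ 2 ≤ R⁻¹ * D⁻¹ := by
    have h := Real.sq_sqrt (show (0:ℝ) ≤ R⁻¹ * D⁻¹ by positivity)
    nlinarith [Real.sqrt_nonneg (R⁻¹ * D⁻¹), hρpos]
  have hDR : R * D * ρ ^ 2 ≤ 1 := by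
    have h := mul_le_mul_of_nonneg_left hρ2 (show (0:ℝ) ≤ R * D by positivity)
    calc R * D * ρ ^ 2 ≤ R * D * (R⁻¹ * D⁻¹) := h
      _ = 1 := by field_simp
  have hsubV : {η : ℂ × EuclideanSpace ℂ (Fin (q - 1)) | ‖η.1‖ ^ 2 + ‖η.2‖ ^ 2 < ρ ^ 2} ⊆ V := by
    intro η hη
    simp only [mem_setOf_eq] at hη
    apply hballV
    have h1 : ‖η.1‖ < ρ := by
      refine lt_of_pow_lt_pow_left₀ 2 hρpos.le ?_
      nlinarith [sq_nonneg ‖η.2‖, norm_nonneg η.2]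
    have h2 : ‖η.2‖ < ρ := by
      refine lt_of_pow_lt_pow_left₀ 2 hρpos.le ?_
      nlinarith [sq_nonneg ‖η.1‖, norm_nonneg η.1]
    have : dist η (0,0) < ρ := by
      rw [Prod.dist_eq]
      simp only [dist_zero_right]
      exact max_lt h1 h2
    exact lt_of_lt_of_le this hρε
  refine ⟨ρ, hρpos, hsubV, ?_, ?_⟩
  · rintro η ⟨h1, h2⟩
    simp only [mem_setOf_eq] at h1 h2 ⊢
    have hηV : η ∈ V := hsubV h2
    have hr := hr0 η hηV
    exact ⟨⟨hηV, by linarith⟩, h2⟩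
  · rintro η ⟨⟨hηV, h1⟩, h2⟩
    simp only [mem_setOf_eq] at h1 h2 ⊢
    refine ⟨?_, h2⟩
    have hnorm1 : ‖η.1‖ ^ 2 = η.1.re ^ 2 + η.1.im ^ 2 := by
      rw [Complex.sq_norm, Complex.normSq_apply]; ring
    have habs : |η.1.re| ^ 4 = η.1.re ^ 4 := by
      rw [← abs_pow, abs_of_nonneg (by positivity)]
    have hr := hrD η hηV
    rw [habs] at hr
    have h1' : R * (‖η.2‖ ^ 2 + ‖η.1‖ ^ 2 / R - r η) < R * η.1.im :=
      mul_lt_mul_of_pos_left h1 hR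
    rw [mul_sub, mul_add, mul_div_cancel₀ _ (ne_of_gt hR)] at h1'
    have hn1 : ‖η.1‖ ^ 2 < ρ ^ 2 := by linarith [sq_nonneg ‖η.2‖]
    have hn2 : ‖η.2‖ ^ 2 < ρ ^ 2 := by linarith [sq_nonneg ‖η.1‖]
    have ha2 : η.1.re ^ 2 < ρ ^ 2 := by linarith [sq_nonneg η.1.im]
    have hb2 : η.1.im ^ 2 < ρ ^ 2 := by linarith [sq_nonneg η.1.re]
    -- R*D*a^4 ≤ a^2
    have k1 : R * D * η.1.re ^ 4 ≤ η.1.re ^ 2 := by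
      have h0 : R * D * η.1.re ^ 2 ≤ 1 :=
        le_trans (mul_le_mul_of_nonneg_left ha2.le (by positivity)) hDR
      nlinarith [mul_le_mul_of_nonneg_right h0 (sq_nonneg η.1.re)]
    -- R*D*s^2 ≤ s^2
    have k2 : R * D * ‖η.2‖ ^ 4 ≤ (‖η.2‖ ^ 2) ^ 2 := by
      nlinarith [sq_nonneg (‖η.2‖ ^ 2)]
    have key : R * η.1.im > R * ‖η.2‖ ^ 2 + η.1.im ^ 2 - (‖η.2‖ ^ 2) ^ 2 := by
      nlinarith [h1', hr, k1, k2]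
    -- b + s < R
    have hbρ : η.1.im < ρ := by
      have h := Complex.abs_im_le_norm η.1
      have hn : ‖η.1‖ < ρ := lt_of_pow_lt_pow_left₀ 2 hρpos.le hn1
      calc η.1.im ≤ |η.1.im| := le_abs_self _
        _ ≤ ‖η.1‖ := h
        _ = ‖η.1‖ := rfl
        _ < ρ := hn
    have hsρ : ‖η.2‖ ^ 2 < ρ := lt_of_lt_of_le hn2 (by nlinarith)
    have hbs : η.1.im + ‖η.2‖ ^ 2 < R := by linarith
    show η.1.im > ‖η.2‖ ^ 2
    by_contra hc
    push_neg at hc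
    nlinarith [key, mul_nonneg (sub_nonneg.mpr hc) (sub_pos.mpr hbs).le]
end

section
/- Let R > 0. The map T(w₁, w') := (R w₁/(R − i w₁), R w'/(R − i w₁)) is well defined on the Siegel half-space H^q (since R − i w₁ ≠ 0 when Im w₁ > 0), and it maps H^q bijectively onto the horosphere E_{H^q}(I, 0, R) = {(η₁, η') ∈ ℂ × ℂ^{q−1} : Im η₁ > ‖η'‖² + |η₁|²/R}. -/
open Set

private lemma siegel_aux_Dne (R : ℝ) (z : ℂ) (hz : 0 < z.im) (hR : 0 < R) :
    (R:ℂ) - Complex.I * z ≠ 0 := by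
  intro h
  have := congrArg Complex.re h
  simp [Complex.sub_re, Complex.mul_re] at this
  linarith

private lemma siegel_aux_im1 (R : ℝ) (hR : 0 < R) (z : ℂ)
    (hD : (R:ℂ) - Complex.I * z ≠ 0) :
    ((R:ℂ)*z/((R:ℂ)-Complex.I*z)).im - Complex.normSq ((R:ℂ)*z/((R:ℂ)-Complex.I*z))/R
      = R^2 * z.im / Complex.normSq ((R:ℂ)-Complex.I*z) := by
  have hnd : Complex.normSq ((R:ℂ)-Complex.I*z) ≠ 0 := by simpa using hD
  rw [Complex.div_im, Complex.normSq_div]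
  field_simp
  simp [Complex.normSq_apply, Complex.sub_re, Complex.sub_im, Complex.mul_re, Complex.mul_im]
  ring

private lemma siegel_aux_im2 (R : ℝ) (z : ℂ) (hE : (R:ℂ) + Complex.I * z ≠ 0) :
    ((R:ℂ)*z/((R:ℂ)+Complex.I*z)).im
      = R * (R * z.im - Complex.normSq z) / Complex.normSq ((R:ℂ)+Complex.I*z) := by
  have hne : Complex.normSq ((R:ℂ)+Complex.I*z) ≠ 0 := by simpa using hE
  rw [Complex.div_im]
  field_simp
  simp [Complex.normSq_apply, Complex.add_re, Complex.add_im, Complex.mul_re, Complex.mul_im]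
  ring

private lemma siegel_aux_normsq_div (R : ℝ) (c : ℂ) (hc : c ≠ 0) :
    ‖(R:ℂ)/c‖^2 = R^2 / Complex.normSq c := by
  rw [Complex.sq_norm, Complex.normSq_div]
  simp [Complex.normSq_ofReal, sq]

/-- For `R > 0`, the map `T(w₁, w') = (R w₁/(R − i w₁), R w'/(R − i w₁))` is well
defined on the Siegel half-space `ℍ^q` (since `R − i w₁ ≠ 0` when `Im w₁ > 0`) and
maps `ℍ^q` bijectively onto the horosphere
`E_{ℍ^q}(I, 0, R) = {(η₁, η') : Im η₁ > ‖η'‖² + |η₁|²/R}`. -/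
theorem siegel_maps_to_horosphere (q : ℕ) (hq : 1 ≤ q) (R : ℝ) (hR : 0 < R) :
    (∀ w : ℂ × EuclideanSpace ℂ (Fin (q - 1)), 0 < w.1.im →
        (R : ℂ) - Complex.I * w.1 ≠ 0) ∧
    Set.BijOn
      (fun w : ℂ × EuclideanSpace ℂ (Fin (q - 1)) =>
        ((R : ℂ) * w.1 / ((R : ℂ) - Complex.I * w.1),
          ((R : ℂ) / ((R : ℂ) - Complex.I * w.1)) • w.2))
      {w : ℂ × EuclideanSpace ℂ (Fin (q - 1)) | ‖w.2‖ ^ 2 < w.1.im}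
      {η : ℂ × EuclideanSpace ℂ (Fin (q - 1)) |
        ‖η.2‖ ^ 2 + ‖η.1‖ ^ 2 / R < η.1.im} := by
  have hRne : (R:ℂ) ≠ 0 := by exact_mod_cast hR.ne'
  refine ⟨fun w hw => siegel_aux_Dne R w.1 hw hR, ?_⟩
  -- nonvanishing of R + I η₁ on the horosphere
  have hEne : ∀ η : ℂ × EuclideanSpace ℂ (Fin (q - 1)),
      ‖η.2‖ ^ 2 + ‖η.1‖ ^ 2 / R < η.1.im → (R:ℂ) + Complex.I * η.1 ≠ 0 := by
    intro η hη h
    have hre := congrArg Complex.re h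
    have him := congrArg Complex.im h
    simp [Complex.add_re, Complex.add_im, Complex.mul_re, Complex.mul_im] at hre him
    have h1 : ‖η.1‖^2 = η.1.re^2 + η.1.im^2 := by
      rw [Complex.sq_norm, Complex.normSq_apply]; ring
    have h2 : (0:ℝ) ≤ ‖η.2‖^2 := sq_nonneg _
    rw [h1, him] at hη
    have him' : η.1.im = R := by linarith
    rw [him'] at hη
    have e : ((0:ℝ)^2 + R^2)/R = R := by rw [div_eq_iff hR.ne']; ring
    rw [e] at hη
    linarith
  apply Set.InvOn.bijOn (f' := fun η : ℂ × EuclideanSpace ℂ (Fin (q - 1)) =>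
      ((R : ℂ) * η.1 / ((R : ℂ) + Complex.I * η.1),
        ((R : ℂ) / ((R : ℂ) + Complex.I * η.1)) • η.2))
  · constructor
    · -- left inverse on the Siegel domain
      intro w hw
      have him : 0 < w.1.im := lt_of_le_of_lt (sq_nonneg _) hw
      have hD := siegel_aux_Dne R w.1 him hR
      have hE' : (R:ℂ) + Complex.I * ((R:ℂ) * w.1 / ((R:ℂ) - Complex.I * w.1))
          = (R:ℂ)^2 / ((R:ℂ) - Complex.I * w.1) := by
        field_simp; ring
      simp only [id_eq, Function.comp_apply]
      refine Prod.ext ?_ ?_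
      · show (R:ℂ) * ((R:ℂ) * w.1 / ((R:ℂ) - Complex.I * w.1)) / _ = w.1
        rw [hE', div_div_eq_mul_div, mul_assoc, div_mul_cancel₀ _ hD, ← mul_assoc, ← sq,
          mul_div_cancel_left₀ _ (pow_ne_zero 2 hRne)]
      · show ((R:ℂ) / ((R:ℂ) + Complex.I * ((R:ℂ) * w.1 / ((R:ℂ) - Complex.I * w.1)))) •
            (((R:ℂ) / ((R:ℂ) - Complex.I * w.1)) • w.2) = w.2
        rw [hE', smul_smul]
        have : (R:ℂ) / ((R:ℂ)^2 / ((R:ℂ) - Complex.I * w.1)) *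
            ((R:ℂ) / ((R:ℂ) - Complex.I * w.1)) = 1 := by
          field_simp
        rw [this, one_smul]
    · -- right inverse on the horosphere
      intro η hη
      have hE := hEne η hη
      have hD' : (R:ℂ) - Complex.I * ((R:ℂ) * η.1 / ((R:ℂ) + Complex.I * η.1))
          = (R:ℂ)^2 / ((R:ℂ) + Complex.I * η.1) := by
        field_simp; ring
      simp only [id_eq, Function.comp_apply]
      refine Prod.ext ?_ ?_
      · show (R:ℂ) * ((R:ℂ) * η.1 / ((R:ℂ) + Complex.I * η.1)) / _ = η.1
        rw [hD', div_div_eq_mul_div, mul_assoc, div_mul_cancel₀ _ hE, ← mul_assoc, ← sq,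
          mul_div_cancel_left₀ _ (pow_ne_zero 2 hRne)]
      · show ((R:ℂ) / ((R:ℂ) - Complex.I * ((R:ℂ) * η.1 / ((R:ℂ) + Complex.I * η.1)))) •
            (((R:ℂ) / ((R:ℂ) + Complex.I * η.1)) • η.2) = η.2
        rw [hD', smul_smul]
        have : (R:ℂ) / ((R:ℂ)^2 / ((R:ℂ) + Complex.I * η.1)) *
            ((R:ℂ) / ((R:ℂ) + Complex.I * η.1)) = 1 := by
          field_simp
        rw [this, one_smul]
  · -- maps the Siegel domain into the horosphere
    intro w hw
    have him : (0:ℝ) < w.1.im := lt_of_le_of_lt (sq_nonneg _) hw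
    have hD := siegel_aux_Dne R w.1 him hR
    have hnd : 0 < Complex.normSq ((R:ℂ) - Complex.I * w.1) := Complex.normSq_pos.mpr hD
    simp only [mem_setOf_eq] at hw ⊢
    have h1 : ‖((R : ℂ) / ((R : ℂ) - Complex.I * w.1)) • w.2‖ ^ 2
        = R^2 / Complex.normSq ((R:ℂ) - Complex.I * w.1) * ‖w.2‖^2 := by
      rw [norm_smul, mul_pow, siegel_aux_normsq_div R _ hD]
    have h2 : ‖(R : ℂ) * w.1 / ((R : ℂ) - Complex.I * w.1)‖ ^ 2
        = Complex.normSq ((R : ℂ) * w.1 / ((R : ℂ) - Complex.I * w.1)) := by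
      rw [Complex.sq_norm]
    rw [h1, h2]
    have key := siegel_aux_im1 R hR w.1 hD
    have hpos : 0 < R^2 * (w.1.im - ‖w.2‖^2) / Complex.normSq ((R:ℂ) - Complex.I * w.1) := by
      apply div_pos _ hnd
      have : 0 < w.1.im - ‖w.2‖^2 := sub_pos.mpr hw
      positivity
    have hsplit : R^2 * (w.1.im - ‖w.2‖^2) / Complex.normSq ((R:ℂ) - Complex.I * w.1)
        = R^2 * w.1.im / Complex.normSq ((R:ℂ) - Complex.I * w.1)
          - R^2 / Complex.normSq ((R:ℂ) - Complex.I * w.1) * ‖w.2‖^2 := by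
      ring
    linarith
  · -- maps the horosphere into the Siegel domain
    intro η hη
    simp only [mem_setOf_eq] at hη ⊢
    have hE := hEne η hη
    have hne : 0 < Complex.normSq ((R:ℂ) + Complex.I * η.1) := Complex.normSq_pos.mpr hE
    have h1 : ‖((R : ℂ) / ((R : ℂ) + Complex.I * η.1)) • η.2‖ ^ 2
        = R^2 / Complex.normSq ((R:ℂ) + Complex.I * η.1) * ‖η.2‖^2 := by
      rw [norm_smul, mul_pow, siegel_aux_normsq_div R _ hE]
    have h2 : ‖η.1‖^2 = Complex.normSq η.1 := by
      rw [Complex.sq_norm]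
    rw [h2] at hη
    rw [h1]
    have key := siegel_aux_im2 R η.1 hE
    rw [key]
    have hη' : ‖η.2‖^2 * R + Complex.normSq η.1 < η.1.im * R := by
      have h3 := mul_lt_mul_of_pos_right hη hR
      have h4 : (‖η.2‖^2 + Complex.normSq η.1 / R) * R
          = ‖η.2‖^2 * R + Complex.normSq η.1 := by
        field_simp
      linarith
    have hnum : R^2 * ‖η.2‖^2 < R * (R * η.1.im - Complex.normSq η.1) := by
      nlinarith [mul_lt_mul_of_pos_right hη' hR]
    calc R^2 / Complex.normSq ((R:ℂ) + Complex.I * η.1) * ‖η.2‖^2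
        = R^2 * ‖η.2‖^2 / Complex.normSq ((R:ℂ) + Complex.I * η.1) := by ring
      _ < R * (R * η.1.im - Complex.normSq η.1) / Complex.normSq ((R:ℂ) + Complex.I * η.1) :=
          (div_lt_div_iff_of_pos_right hne).mpr hnum
end
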